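/- A Polish group G is Roelcke precompact (as a group) if and only if G is coarsely bounded (as a group) and locally Roelcke precompact. -/

import Mathlib

open scoped Pointwise

/-- A subset `A` of a topological group `G` is *Roelcke precompact* if for every
neighborhood `V` of the identity there is a finite set `F ⊆ G` with `A ⊆ V * F * V`,
where `V * F * V = {v * f * w : v, w ∈ V, f ∈ F}`. -/
def RoelckePrecompact {G : Type*} [Group G] [TopologicalSpace G] (A : Set G) : Prop :=
  ∀ V ∈ nhds (1 : G), ∃ F : Finset G, A ⊆ V * (F : Set G) * V

/-- A topological group is *locally Roelcke precompact* if some open neighborhood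
of the identity is Roelcke precompact. -/
def LocallyRoelckePrecompact (G : Type*) [Group G] [TopologicalSpace G] : Prop :=
  ∃ U : Set G, IsOpen U ∧ (1 : G) ∈ U ∧ RoelckePrecompact U

/-- A subset `A` of a topological group is *coarsely bounded* if every continuous
left-invariant pseudometric on `G` assigns finite diameter to `A`. -/
def IsCoarselyBounded {G : Type*} [Group G] [TopologicalSpace G] (A : Set G) : Prop :=
  ∀ d : G → G → ℝ,
    Continuous (fun p : G × G => d p.1 p.2) →
    (∀ x, d x x = 0) → (∀ x y, d x y = d y x) → (∀ x y z, d x z ≤ d x y + d y z) →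
    (∀ g x y, d (g * x) (g * y) = d x y) →
    ∃ C : ℝ, ∀ x ∈ A, ∀ y ∈ A, d x y ≤ C

open Filter

set_option linter.unusedSectionVars false

section RPHelpers

variable {G : Type*} [Group G] [TopologicalSpace G] [IsTopologicalGroup G]

private lemma conj_mem_nhds (g : G) {V : Set G} (hV : V ∈ nhds (1 : G)) :
    {x : G | g * x * g⁻¹ ∈ V} ∈ nhds (1 : G) := by
  have hc : Continuous fun x : G => g * x * g⁻¹ :=
    (continuous_mul_right g⁻¹).comp (continuous_mul_left g)
  have h1 : g * (1 : G) * g⁻¹ = 1 := by group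
  have := hc.continuousAt (x := (1 : G))
  rw [ContinuousAt, h1] at this
  exact this hV

private lemma rp_mono {A B : Set G} (hAB : A ⊆ B) (h : RoelckePrecompact B) :
    RoelckePrecompact A := fun V hV => (h V hV).imp fun _ hF => hAB.trans hF

private lemma rp_union {A B : Set G} (hA : RoelckePrecompact A) (hB : RoelckePrecompact B) :
    RoelckePrecompact (A ∪ B) := by
  classical
  intro V hV
  obtain ⟨F₁, hF₁⟩ := hA V hV
  obtain ⟨F₂, hF₂⟩ := hB V hV
  refine ⟨F₁ ∪ F₂, Set.union_subset ?_ ?_⟩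
  · refine hF₁.trans ?_
    refine Set.mul_subset_mul (Set.mul_subset_mul_left ?_) subset_rfl
    simp only [Finset.coe_union]; exact Set.subset_union_left
  · refine hF₂.trans ?_
    refine Set.mul_subset_mul (Set.mul_subset_mul_left ?_) subset_rfl
    simp only [Finset.coe_union]; exact Set.subset_union_right

private lemma rp_singleton_mul (g : G) {A : Set G} (h : RoelckePrecompact A) :
    RoelckePrecompact ({g} * A) := by
  classical
  intro V hV
  obtain ⟨F, hF⟩ := h ({x : G | g * x * g⁻¹ ∈ V} ∩ V) (inter_mem (conj_mem_nhds g hV) hV)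
  refine ⟨F.image (fun f => g * f), ?_⟩
  rintro x ⟨g', hg', a, ha, rfl⟩
  have hgg : g = g' := (Set.mem_singleton_iff.1 hg').symm
  subst hgg
  obtain ⟨c, ⟨v, hv, f, hf, rfl⟩, w, hw, rfl⟩ := hF ha
  refine ⟨(g * v * g⁻¹) * (g * f), Set.mul_mem_mul hv.1 ?_, w, hw.2, by group⟩
  exact Finset.mem_coe.2 (Finset.mem_image.2 ⟨f, Finset.mem_coe.1 hf, rfl⟩)

private lemma rp_mul_singleton (g : G) {A : Set G} (h : RoelckePrecompact A) :
    RoelckePrecompact (A * {g}) := by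
  classical
  intro V hV
  obtain ⟨F, hF⟩ := h (V ∩ {x : G | g⁻¹ * x * g ∈ V})
    (inter_mem hV (by simpa using conj_mem_nhds g⁻¹ hV))
  refine ⟨F.image (fun f => f * g), ?_⟩
  rintro x ⟨a, ha, g', hg', rfl⟩
  have hgg : g = g' := (Set.mem_singleton_iff.1 hg').symm
  subst hgg
  obtain ⟨c, ⟨v, hv, f, hf, rfl⟩, w, hw, rfl⟩ := hF ha
  refine ⟨v * (f * g), Set.mul_mem_mul hv.1 ?_, g⁻¹ * w * g, hw.2, by group⟩
  exact Finset.mem_coe.2 (Finset.mem_image.2 ⟨f, Finset.mem_coe.1 hf, rfl⟩)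

/-- The key product lemma: if `U` is a Roelcke precompact neighborhood of `1`,
then `U * U` is Roelcke precompact. -/
private lemma rp_mul_self {U : Set G} (hU : U ∈ nhds (1 : G)) (hrp : RoelckePrecompact U) :
    RoelckePrecompact (U * U) := by
  classical
  intro Vs hVs
  obtain ⟨V₀, hV₀o, hV₀1, hV₀sub⟩ := exists_open_nhds_one_mul_subset (inter_mem hVs hU)
  have hV₀n : V₀ ∈ nhds (1 : G) := hV₀o.mem_nhds hV₀1
  obtain ⟨F₀, hF₀⟩ := hrp V₀ hV₀n
  set V₁ : Set G :=
    V₀ ∩ ⋂ f ∈ F₀, ({x : G | f * x * f⁻¹ ∈ V₀} ∩ {x : G | f⁻¹ * x * f ∈ V₀}) with hV₁def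
  have hV₁n : V₁ ∈ nhds (1 : G) := by
    refine inter_mem hV₀n ?_
    refine (Filter.biInter_finset_mem F₀).2 fun f _ => inter_mem (conj_mem_nhds f hV₀n) ?_
    simpa using conj_mem_nhds f⁻¹ hV₀n
  obtain ⟨F₁, hF₁⟩ := hrp V₁ hV₁n
  refine ⟨F₀ * F₁ * F₀, ?_⟩
  rintro x ⟨u, hu, u', hu', rfl⟩
  obtain ⟨a, ⟨v₁, hv₁, f, hf, rfl⟩, v₂, hv₂, rfl⟩ := hF₀ hu
  obtain ⟨b, ⟨v₃, hv₃, f', hf', rfl⟩, v₄, hv₄, rfl⟩ := hF₀ hu'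
  have hmid : v₂ * v₃ ∈ U := (hV₀sub (Set.mul_mem_mul hv₂ hv₃)).2
  obtain ⟨c, ⟨w₁, hw₁, f₁, hf₁, rfl⟩, w₂, hw₂, heq⟩ := hF₁ hmid
  have hw₁c : f * w₁ * f⁻¹ ∈ V₀ :=
    (Set.mem_iInter₂.1 hw₁.2 f (Finset.mem_coe.1 hf)).1
  have hw₂c : f'⁻¹ * w₂ * f' ∈ V₀ :=
    (Set.mem_iInter₂.1 hw₂.2 f' (Finset.mem_coe.1 hf')).2
  refine ⟨(v₁ * (f * w₁ * f⁻¹)) * (f * f₁ * f'),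
    Set.mul_mem_mul ((hV₀sub (Set.mul_mem_mul hv₁ hw₁c)).1) ?_,
    (f'⁻¹ * w₂ * f') * v₄, (hV₀sub (Set.mul_mem_mul hw₂c hv₄)).1, ?_⟩
  · exact Finset.mem_coe.2
      (Finset.mul_mem_mul (Finset.mul_mem_mul (Finset.mem_coe.1 hf) (Finset.mem_coe.1 hf₁))
        (Finset.mem_coe.1 hf'))
  · have h2 : w₁ * f₁ * w₂ = v₂ * v₃ := heq
    calc (v₁ * (f * w₁ * f⁻¹)) * (f * f₁ * f') * ((f'⁻¹ * w₂ * f') * v₄)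
        = v₁ * f * (w₁ * f₁ * w₂) * f' * v₄ := by group
      _ = v₁ * f * (v₂ * v₃) * f' * v₄ := by rw [h2]
      _ = v₁ * f * v₂ * (v₃ * f' * v₄) := by group

private lemma isOpen_pow_of_ne_zero {s : Set G} (hs : IsOpen s) {n : ℕ} (hn : n ≠ 0) :
    IsOpen (s ^ n) := by
  obtain ⟨m, rfl⟩ := Nat.exists_eq_succ_of_ne_zero hn
  rw [pow_succ]
  exact hs.mul_left

private lemma rp_pow_two {U : Set G} (hUo : IsOpen U) (hU1 : (1:G) ∈ U)
    (hrp : RoelckePrecompact U) (k : ℕ) : RoelckePrecompact (U ^ (2^k : ℕ)) := by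
  induction k with
  | zero => simpa using hrp
  | succ m ih =>
    have h2 : (2:ℕ)^(m+1) = 2^m + 2^m := by rw [pow_succ, Nat.mul_two]
    rw [h2, pow_add]
    exact rp_mul_self
      ((isOpen_pow_of_ne_zero hUo (Nat.two_pow_pos m).ne').mem_nhds (Set.one_mem_pow hU1)) ih

end RPHelpers

section BK

variable {G : Type*} [Group G]

/-- The set of costs of words representing `g`. -/
private def bkCost (D : ℤ → Set G) (g : G) : Set ℝ :=
  {x | ∃ L : List ℤ, (L.map fun k => (2:ℝ)^k).sum = x ∧ g ∈ (L.map D).prod}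

private noncomputable def bkLen (D : ℤ → Set G) (g : G) : ℝ := sInf (bkCost D g)

variable {D : ℤ → Set G}

private lemma bk_mono (hone : ∀ k, (1:G) ∈ D k) (htriple : ∀ k, D k * D k * D k ⊆ D (k+1))
    {k k' : ℤ} (h : k ≤ k') : D k ⊆ D k' := by
  obtain ⟨n, rfl⟩ := Int.le.dest h
  clear h
  induction n with
  | zero => simp
  | succ m ihm =>
    have hstep : D (k + m) ⊆ D (k + m + 1) := by
      intro a ha
      have : (1:G) * 1 * a ∈ D (k+m) * D (k+m) * D (k+m) :=
        Set.mul_mem_mul (Set.mul_mem_mul (hone _) (hone _)) ha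
      simpa using htriple (k+m) this
    have heq : (k : ℤ) + ((m:ℕ)+1 : ℕ) = (k + m) + 1 := by push_cast; ring
    rw [heq]
    exact ihm.trans hstep

private lemma bk_chain (hone : ∀ k, (1:G) ∈ D k)
    (htriple : ∀ k, D k * D k * D k ⊆ D (k+1)) :
    ∀ (L : List ℤ) (K : ℤ), ((L.map fun k => (2:ℝ)^k).sum < (2:ℝ)^K) →
      (L.map D).prod ⊆ D K := by
  classical
  have main : ∀ (r : ℕ) (L : List ℤ), L.length ≤ r → ∀ K : ℤ,
      ((L.map fun k => (2:ℝ)^k).sum < (2:ℝ)^K) → (L.map D).prod ⊆ D K := by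
    intro r
    induction r with
    | zero =>
      intro L hL K _
      rw [List.length_eq_zero_iff.1 (Nat.le_zero.1 hL)]
      intro x hx
      rw [List.map_nil, List.prod_nil, Set.mem_one] at hx
      rw [hx]; exact hone K
    | succ r ih =>
      intro L hL K hsum
      by_cases hnil : L = []
      · subst hnil
        intro x hx
        rw [List.map_nil, List.prod_nil, Set.mem_one] at hx
        rw [hx]; exact hone K
      have hlen : 0 < L.length := List.length_pos_iff.2 hnil
      set M : List ℝ := L.map fun k => (2:ℝ)^k with hM
      have hMpos : ∀ x ∈ M, (0:ℝ) ≤ x := by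
        intro x hx
        obtain ⟨k, _, rfl⟩ := List.mem_map.1 hx
        exact le_of_lt (zpow_pos (by norm_num) k)
      set P : ℕ → Prop := fun p => (M.take p).sum < (2:ℝ)^(K-1) with hP
      have hP0 : P 0 := by
        simp only [hP, List.take_zero, List.sum_nil]
        exact zpow_pos (by norm_num) _
      set p : ℕ := Nat.findGreatest P (L.length - 1) with hp
      have hPp : P p := Nat.findGreatest_spec (Nat.zero_le _) hP0
      have hple : p ≤ L.length - 1 := Nat.findGreatest_le _
      have hplt : p < L.length := lt_of_le_of_lt hple (Nat.sub_lt hlen one_pos)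
      have hpr : p ≤ r := le_trans hple (by omega)
      have hpre : ((L.take p).map D).prod ⊆ D (K-1) := by
        refine ih (L.take p) (by rw [List.length_take]; omega) (K-1) ?_
        rw [List.map_take, ← hM]
        exact hPp
      have hmidmem : (2:ℝ)^(L[p]'hplt) ≤ M.sum := by
        refine List.single_le_sum hMpos _ ?_
        exact List.mem_map.2 ⟨L[p]'hplt, List.getElem_mem hplt, rfl⟩
      have hmidlt : (L[p]'hplt) < K := by
        have := lt_of_le_of_lt hmidmem hsum
        exact (zpow_lt_zpow_iff_right₀ (by norm_num : (1:ℝ) < 2)).1 this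
      have hmid : D (L[p]'hplt) ⊆ D (K-1) :=
        bk_mono hone htriple (by omega)
      have hsuf : ((L.drop (p+1)).map D).prod ⊆ D (K-1) := by
        by_cases hend : p + 1 ≤ L.length - 1
        · have hnP : ¬ P (p+1) :=
            Nat.findGreatest_is_greatest (by omega) hend
          have hge : (2:ℝ)^(K-1) ≤ (M.take (p+1)).sum := le_of_not_gt hnP
          have hsplit : (M.take (p+1)).sum + (M.drop (p+1)).sum = M.sum := by
            rw [← List.sum_append, List.take_append_drop]
          have h2K : (2:ℝ)^K = (2:ℝ)^(K-1) + (2:ℝ)^(K-1) := by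
            have : (2:ℝ)^K = (2:ℝ)^(K-1) * 2 := by
              rw [← zpow_add_one₀ (by norm_num : (2:ℝ) ≠ 0)]
              norm_num
            linarith [this]
          refine ih (L.drop (p+1)) (by rw [List.length_drop]; omega) (K-1) ?_
          have h3 : (M.drop (p+1)).sum < (2:ℝ)^(K-1) := by linarith
          rw [List.map_drop, ← hM]
          exact h3
        · have : L.drop (p+1) = [] := List.drop_eq_nil_of_le (by omega)
          rw [this]
          intro x hx
          rw [List.map_nil, List.prod_nil, Set.mem_one] at hx
          rw [hx]; exact hone (K-1)
      have hdecomp : (L.map D).prod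
          = ((L.take p).map D).prod * (D (L[p]'hplt) * ((L.drop (p+1)).map D).prod) := by
        conv_lhs => rw [← List.take_append_drop p L, List.drop_eq_getElem_cons hplt]
        rw [List.map_append, List.prod_append, List.map_cons, List.prod_cons]
      rw [hdecomp]
      have hsub : ((L.take p).map D).prod * (D (L[p]'hplt) * ((L.drop (p+1)).map D).prod)
          ⊆ D (K-1) * (D (K-1) * D (K-1)) :=
        Set.mul_subset_mul hpre (Set.mul_subset_mul hmid hsuf)
      refine hsub.trans ?_
      rw [← mul_assoc]
      have := htriple (K-1)
      rwa [sub_add_cancel] at this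
  exact fun L K h => main L.length L le_rfl K h

private lemma bk_mem_concat {g h : G} {x y : ℝ} (hx : x ∈ bkCost D g) (hy : y ∈ bkCost D h) :
    x + y ∈ bkCost D (g * h) := by
  obtain ⟨L₁, hs₁, hp₁⟩ := hx
  obtain ⟨L₂, hs₂, hp₂⟩ := hy
  refine ⟨L₁ ++ L₂, ?_, ?_⟩
  · rw [List.map_append, List.sum_append, hs₁, hs₂]
  · rw [List.map_append, List.prod_append]
    exact Set.mul_mem_mul hp₁ hp₂

private lemma bk_nonempty (hexh : ∀ g : G, ∃ n : ℕ, g ∈ D (n:ℤ)) (g : G) :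
    (bkCost D g).Nonempty := by
  obtain ⟨n, hn⟩ := hexh g
  exact ⟨(2:ℝ)^(n:ℤ), [(n:ℤ)], by simp, by simpa using hn⟩

private lemma bk_bddBelow (g : G) : BddBelow (bkCost D g) := by
  refine ⟨0, fun x hx => ?_⟩
  obtain ⟨L, rfl, -⟩ := hx
  refine List.sum_nonneg ?_
  intro a ha
  obtain ⟨k, -, rfl⟩ := List.mem_map.1 ha
  exact le_of_lt (zpow_pos (by norm_num) k)

private lemma bk_le_of_mem {g : G} {k : ℤ} (h : g ∈ D k) : bkLen D g ≤ (2:ℝ)^k :=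
  csInf_le (bk_bddBelow g) ⟨[k], by simp, by simpa using h⟩

private lemma bk_nonneg (hexh : ∀ g : G, ∃ n : ℕ, g ∈ D (n:ℤ)) (g : G) : 0 ≤ bkLen D g := by
  refine le_csInf (bk_nonempty hexh g) (fun x hx => ?_)
  obtain ⟨L, rfl, -⟩ := hx
  refine List.sum_nonneg ?_
  intro a ha
  obtain ⟨k, -, rfl⟩ := List.mem_map.1 ha
  exact le_of_lt (zpow_pos (by norm_num) k)

private lemma bk_subadd (hexh : ∀ g : G, ∃ n : ℕ, g ∈ D (n:ℤ)) (g h : G) :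
    bkLen D (g * h) ≤ bkLen D g + bkLen D h := by
  refine le_of_forall_pos_le_add fun ε hε => ?_
  have hεh : 0 < ε / 2 := by linarith
  have hgdef : bkLen D g = sInf (bkCost D g) := rfl
  have hhdef : bkLen D h = sInf (bkCost D h) := rfl
  obtain ⟨x, hx, hxlt⟩ := (csInf_lt_iff (bk_bddBelow g) (bk_nonempty hexh g)).1
    (by rw [← hgdef]; linarith : sInf (bkCost D g) < bkLen D g + ε/2)
  obtain ⟨y, hy, hylt⟩ := (csInf_lt_iff (bk_bddBelow h) (bk_nonempty hexh h)).1
    (by rw [← hhdef]; linarith : sInf (bkCost D h) < bkLen D h + ε/2)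
  have := csInf_le (bk_bddBelow (g*h)) (bk_mem_concat hx hy)
  have hle : bkLen D (g*h) ≤ x + y := this
  linarith

private lemma bk_prod_reverse (hsym : ∀ k, (D k)⁻¹ = D k) :
    ∀ L : List ℤ, ((L.reverse.map D)).prod = ((L.map D).prod)⁻¹ := by
  intro L
  induction L with
  | nil => simp
  | cons k t ih =>
    rw [List.reverse_cons, List.map_append, List.prod_append, ih, List.map_cons,
      List.prod_cons, List.map_cons, List.map_nil, List.prod_cons, List.prod_nil,
      mul_one, mul_inv_rev, hsym]

private lemma bk_symm (hsym : ∀ k, (D k)⁻¹ = D k) (g : G) : bkLen D g⁻¹ = bkLen D g := by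
  have key : ∀ a : G, bkCost D a ⊆ bkCost D a⁻¹ := by
    rintro a x ⟨L, rfl, hp⟩
    refine ⟨L.reverse, ?_, ?_⟩
    · rw [List.map_reverse, List.sum_reverse]
    · rw [bk_prod_reverse hsym]
      exact Set.inv_mem_inv.2 hp
  have : bkCost D g⁻¹ = bkCost D g := by
    apply Set.Subset.antisymm
    · have := key g⁻¹
      rwa [inv_inv] at this
    · exact key g
  rw [bkLen, bkLen, this]

private lemma bk_lt_mem (hone : ∀ k, (1:G) ∈ D k)
    (htriple : ∀ k, D k * D k * D k ⊆ D (k+1))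
    (hexh : ∀ g : G, ∃ n : ℕ, g ∈ D (n:ℤ)) {g : G} {K : ℤ}
    (h : bkLen D g < (2:ℝ)^K) : g ∈ D K := by
  obtain ⟨x, hx, hxlt⟩ := (csInf_lt_iff (bk_bddBelow g) (bk_nonempty hexh g)).1 h
  obtain ⟨L, rfl, hp⟩ := hx
  exact bk_chain hone htriple L K hxlt hp

private lemma bk_one (hone : ∀ k, (1:G) ∈ D k) (hexh : ∀ g : G, ∃ n : ℕ, g ∈ D (n:ℤ)) :
    bkLen D (1 : G) = 0 := by
  refine le_antisymm ?_ (bk_nonneg hexh 1)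
  refine le_of_forall_pos_le_add fun ε hε => ?_
  obtain ⟨n, hn⟩ := exists_pow_lt_of_lt_one hε (by norm_num : (1:ℝ)/2 < 1)
  have h1 : bkLen D (1:G) ≤ (2:ℝ)^(-(n:ℤ)) := bk_le_of_mem (hone _)
  have h2 : (2:ℝ)^(-(n:ℤ)) = ((1:ℝ)/2)^n := by
    rw [zpow_neg, ← zpow_natCast]
    simp [one_div, inv_zpow]
  linarith [h1, h2 ▸ h1]

end BK

/-- A Polish group is Roelcke precompact (as a group) if and only if it is coarsely
bounded (as a group) and locally Roelcke precompact. -/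
theorem roelckePrecompact_iff_coarselyBounded_and_locallyRoelckePrecompact
    (G : Type*) [Group G] [TopologicalSpace G] [IsTopologicalGroup G] [PolishSpace G] :
    RoelckePrecompact (Set.univ : Set G) ↔
      (IsCoarselyBounded (Set.univ : Set G) ∧ LocallyRoelckePrecompact G) := by
  constructor
  · intro hRP
    constructor
    · -- Roelcke precompact implies coarsely bounded
      intro d hcont hrefl hsymm htri hinv
      have hd0 : ∀ x y : G, 0 ≤ d x y := by
        intro x y
        have t := htri x y x
        have := hrefl x
        have := hsymm x y
        linarith
      have hc1 : Continuous fun g : G => d 1 g :=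
        hcont.comp (continuous_const.prodMk continuous_id)
      have hVopen : IsOpen {g : G | d 1 g < 1} := isOpen_lt hc1 continuous_const
      have hV : {g : G | d 1 g < 1} ∈ nhds (1:G) := hVopen.mem_nhds (by simp [hrefl 1])
      obtain ⟨F, hF⟩ := hRP _ hV
      classical
      set C : ℝ := ∑ f ∈ F, d 1 f with hC
      have hCf : ∀ f ∈ (F : Set G), d 1 f ≤ C := by
        intro f hf
        exact Finset.single_le_sum (fun i _ => hd0 1 i) (Finset.mem_coe.1 hf)
      have hbound : ∀ x : G, d 1 x ≤ C + 2 := by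
        intro x
        obtain ⟨a, ⟨v, hv, f, hf, rfl⟩, w, hw, rfl⟩ := hF (Set.mem_univ x)
        have t1 := htri 1 v (v*f*w)
        have t2 := htri v (v*f) (v*f*w)
        have h2 : d v (v*f) = d 1 f := by
          have := hinv v 1 f; simpa using this
        have h3 : d (v*f) (v*f*w) = d 1 w := by
          have := hinv (v*f) 1 w; simpa using this
        have h4 := hCf f hf
        have hv' : d 1 v < 1 := hv
        have hw' : d 1 w < 1 := hw
        have : d 1 (v*f*w) ≤ d 1 v + d v (v*f) + d (v*f) (v*f*w) := by linarith
        rw [h2, h3] at this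
        linarith
      refine ⟨2*C + 4, fun x _ y _ => ?_⟩
      have t := htri x 1 y
      have hx1 : d x 1 = d 1 x := hsymm x 1
      linarith [hbound x, hbound y]
    · exact ⟨Set.univ, isOpen_univ, Set.mem_univ 1, hRP⟩
  · rintro ⟨hCB, U₀, hU₀o, hU₀1, hU₀rp⟩
    classical
    -- Symmetrize U
    set U : Set G := U₀ ∩ U₀⁻¹ with hUdef
    have hUo : IsOpen U := hU₀o.inter hU₀o.inv
    have hU1 : (1:G) ∈ U := ⟨hU₀1, by simpa using hU₀1⟩
    have hUsym : U⁻¹ = U := by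
      rw [hUdef, Set.inter_inv, inv_inv, Set.inter_comm]
    have hUrp : RoelckePrecompact U := rp_mono Set.inter_subset_left hU₀rp
    have hUnhds : U ∈ nhds (1:G) := hUo.mem_nhds hU1
    -- dense sequence
    haveI : Nonempty G := ⟨1⟩
    set u : ℕ → G := TopologicalSpace.denseSeq G with hu_def
    have hu : DenseRange u := TopologicalSpace.denseRange_denseSeq G
    -- translated pieces
    set T : ℕ → Set G := fun k => {u k} * U ∪ U * {(u k)⁻¹} with hTdef
    have hTo : ∀ k, IsOpen (T k) := fun k => (hUo.mul_left).union (hUo.mul_right)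
    have hTsym : ∀ k, (T k)⁻¹ = T k := by
      intro k
      show ({u k} * U ∪ U * {(u k)⁻¹})⁻¹ = {u k} * U ∪ U * {(u k)⁻¹}
      rw [Set.union_inv, mul_inv_rev, mul_inv_rev, Set.inv_singleton, Set.inv_singleton,
        inv_inv, hUsym, Set.union_comm]
    have hTrp : ∀ k, RoelckePrecompact (T k) := fun k =>
      rp_union (rp_singleton_mul (u k) hUrp) (rp_mul_singleton ((u k)⁻¹) hUrp)
    -- increasing unions
    set S : ℕ → Set G := fun n => Nat.rec (U ∪ T 0) (fun m Sm => Sm ∪ T (m+1)) n with hSdef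
    have hSsucc : ∀ n, S (n+1) = S n ∪ T (n+1) := fun n => rfl
    have hS0 : S 0 = U ∪ T 0 := rfl
    have hSo : ∀ n, IsOpen (S n) := by
      intro n
      induction n with
      | zero => exact hUo.union (hTo 0)
      | succ m ih => rw [hSsucc]; exact ih.union (hTo (m+1))
    have hS1 : ∀ n, (1:G) ∈ S n := by
      intro n
      induction n with
      | zero => exact Or.inl hU1
      | succ m ih => rw [hSsucc]; exact Or.inl ih
    have hSsym : ∀ n, (S n)⁻¹ = S n := by
      intro n
      induction n with
      | zero => rw [hS0, Set.union_inv, hUsym, hTsym]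
      | succ m ih => rw [hSsucc, Set.union_inv, ih, hTsym]
    have hSrp : ∀ n, RoelckePrecompact (S n) := by
      intro n
      induction n with
      | zero => exact rp_union hUrp (hTrp 0)
      | succ m ih => rw [hSsucc]; exact rp_union ih (hTrp (m+1))
    have hSmono : ∀ n, S n ⊆ S (n+1) := by
      intro n; rw [hSsucc]; exact Set.subset_union_left
    have hSle : ∀ {a b : ℕ}, a ≤ b → S a ⊆ S b := by
      intro a b h
      induction h with
      | refl => exact subset_rfl
      | step h ih => exact ih.trans (hSmono _)
    have hTS : ∀ k, T k ⊆ S k := by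
      intro k
      cases k with
      | zero => rw [hS0]; exact Set.subset_union_right
      | succ m => rw [hSsucc]; exact Set.subset_union_right
    have hScover : ∀ g : G, ∃ n, g ∈ S n := by
      intro g
      have hopen : IsOpen ({g} * U) := hUo.mul_left
      have hne : ({g} * U).Nonempty := ⟨g, g, rfl, 1, hU1, mul_one g⟩
      obtain ⟨k, hk⟩ := hu.exists_mem_open hopen hne
      obtain ⟨g', hg', w, hw, hprod⟩ := hk
      have hgg : g = g' := (Set.mem_singleton_iff.1 hg').symm
      subst hgg
      have hw' : w⁻¹ ∈ U := by
        rw [← hUsym]; exact Set.inv_mem_inv.2 hw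
      refine ⟨k, hTS k (Or.inl ⟨u k, rfl, w⁻¹, hw', ?_⟩)⟩
      rw [← hprod]; group
    -- powers
    set W : ℕ → Set G := fun n => S n ^ (2^n : ℕ) with hWdef
    have hW1 : ∀ n, (1:G) ∈ W n := fun n => Set.one_mem_pow (hS1 n)
    have hWo : ∀ n, IsOpen (W n) := fun n =>
      isOpen_pow_of_ne_zero (hSo n) (Nat.two_pow_pos n).ne'
    have hWnhds : ∀ n, W n ∈ nhds (1:G) := fun n => (hWo n).mem_nhds (hW1 n)
    have hWsym : ∀ n, (W n)⁻¹ = W n := by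
      intro n
      show (S n ^ (2^n : ℕ))⁻¹ = S n ^ (2^n : ℕ)
      rw [← inv_pow, hSsym]
    have hWrp : ∀ n, RoelckePrecompact (W n) := fun n =>
      rp_pow_two (hSo n) (hS1 n) (hSrp n) n
    have hWmul : ∀ n, W n * W n ⊆ W (n+1) := by
      intro n
      show S n ^ (2^n : ℕ) * S n ^ (2^n : ℕ) ⊆ S (n+1) ^ (2^(n+1) : ℕ)
      rw [← pow_add]
      have h2 : (2:ℕ)^n + 2^n = 2^(n+1) := by rw [pow_succ, Nat.mul_two]
      rw [h2]
      exact Set.pow_subset_pow_left (hSmono n)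
    have hWmono : ∀ n, W n ⊆ W (n+1) := by
      intro n
      refine (Set.subset_mul_left (W n) (hW1 n)).trans (hWmul n)
    have hWle : ∀ {a b : ℕ}, a ≤ b → W a ⊆ W b := by
      intro a b h
      induction h with
      | refl => exact subset_rfl
      | step h ih => exact ih.trans (hWmono _)
    have hWcover : ∀ g : G, ∃ n, g ∈ W n := by
      intro g
      obtain ⟨n, hn⟩ := hScover g
      exact ⟨n, Set.subset_pow (hS1 n) (Nat.two_pow_pos n).ne' hn⟩
    -- downward chain
    have hVex : ∀ s : Set G, s ∈ nhds (1:G) →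
        ∃ t : Set G, (t ∈ nhds (1:G) ∧ t⁻¹ = t) ∧ t * t ⊆ s := by
      intro s hs
      obtain ⟨t₀, hto, ht1, hts⟩ := exists_open_nhds_one_mul_subset hs
      have htn : t₀ ∈ nhds (1:G) := hto.mem_nhds ht1
      refine ⟨t₀ ∩ t₀⁻¹, ⟨inter_mem htn (inv_mem_nhds_one G htn), ?_⟩, ?_⟩
      · rw [Set.inter_inv, inv_inv, Set.inter_comm]
      · exact (Set.mul_subset_mul Set.inter_subset_left Set.inter_subset_left).trans hts
    set Vp : ℕ → {t : Set G // t ∈ nhds (1:G) ∧ t⁻¹ = t} :=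
      fun n => Nat.rec ⟨W 0, hWnhds 0, hWsym 0⟩
        (fun _ prev => ⟨Classical.choose (hVex prev.1 prev.2.1),
          (Classical.choose_spec (hVex prev.1 prev.2.1)).1⟩) n with hVpdef
    set V : ℕ → Set G := fun n => (Vp n).1 with hVdef
    have hV0 : V 0 = W 0 := rfl
    have hVnhds : ∀ n, V n ∈ nhds (1:G) := fun n => (Vp n).2.1
    have hVsym : ∀ n, (V n)⁻¹ = V n := fun n => (Vp n).2.2
    have hVsq : ∀ n, V (n+1) * V (n+1) ⊆ V n := fun n =>
      (Classical.choose_spec (hVex (Vp n).1 (Vp n).2.1)).2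
    have hV1 : ∀ n, (1:G) ∈ V n := fun n => mem_of_mem_nhds (hVnhds n)
    have hVmono : ∀ n, V (n+1) ⊆ V n := by
      intro n x hx
      have : x * 1 ∈ V (n+1) * V (n+1) := Set.mul_mem_mul hx (hV1 (n+1))
      rw [mul_one] at this
      exact hVsq n this
    have hVle : ∀ {a b : ℕ}, a ≤ b → V b ⊆ V a := by
      intro a b h
      induction h with
      | refl => exact subset_rfl
      | step h ih => exact (hVmono _).trans ih
    -- triple chains
    have keyW : ∀ m : ℕ, W m * W m * W m ⊆ W (m+2) := by
      intro m
      have h1 : W m * W m * W m ⊆ W (m+1) * W m := Set.mul_subset_mul (hWmul m) subset_rfl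
      have h2 : W (m+1) * W m ⊆ W (m+1) * W (m+1) :=
        Set.mul_subset_mul subset_rfl (hWmono m)
      exact h1.trans (h2.trans (hWmul (m+1)))
    have keyV : ∀ m : ℕ, V (m+2) * V (m+2) * V (m+2) ⊆ V m := by
      intro m
      have h1 : V (m+2) * V (m+2) * V (m+2) ⊆ V (m+1) * V (m+2) :=
        Set.mul_subset_mul (hVsq (m+1)) subset_rfl
      have h2 : V (m+1) * V (m+2) ⊆ V (m+1) * V (m+1) :=
        Set.mul_subset_mul subset_rfl (hVmono (m+1))
      exact h1.trans (h2.trans (hVsq m))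
    -- the ℤ-indexed chain
    set D : ℤ → Set G := fun k => if 0 ≤ k then W (2 * k.toNat) else V (2 * (-k).toNat)
      with hDdef
    have hDpos : ∀ n : ℕ, D (n:ℤ) = W (2*n) := by
      intro n
      simp [hDdef, Int.toNat_natCast]
    have hDneg : ∀ n : ℕ, 0 < n → D (-(n:ℤ)) = V (2*n) := by
      intro n hn
      have h1 : ¬ (0 ≤ -(n:ℤ)) := by omega
      simp only [hDdef, h1, if_false, neg_neg, Int.toNat_natCast]
    have hone : ∀ k, (1:G) ∈ D k := by
      intro k
      by_cases h : 0 ≤ k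
      · simp only [hDdef, h, if_true]; exact hW1 _
      · simp only [hDdef, h, if_false]; exact hV1 _
    have hsym : ∀ k, (D k)⁻¹ = D k := by
      intro k
      by_cases h : 0 ≤ k
      · simp only [hDdef, h, if_true]; exact hWsym _
      · simp only [hDdef, h, if_false]; exact hVsym _
    have hexh : ∀ g : G, ∃ n : ℕ, g ∈ D (n:ℤ) := by
      intro g
      obtain ⟨n, hn⟩ := hWcover g
      refine ⟨n, ?_⟩
      rw [hDpos n]
      exact hWle (by omega) hn
    have hnhds : ∀ n : ℕ, D (-(n:ℤ)) ∈ nhds (1:G) := by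
      intro n
      rcases Nat.eq_zero_or_pos n with h | h
      · subst h
        simpa using (hDpos 0 ▸ hWnhds 0 : D ((0:ℕ):ℤ) ∈ nhds (1:G))
      · rw [hDneg n h]; exact hVnhds _
    have htriple : ∀ k, D k * D k * D k ⊆ D (k+1) := by
      intro k
      rcases le_or_gt 0 k with hk | hk
      · have hk1 : (0:ℤ) ≤ k + 1 := by omega
        have e1 : D k = W (2 * k.toNat) := by simp only [hDdef, hk, if_true]
        have e2 : D (k+1) = W (2 * (k+1).toNat) := by simp only [hDdef, hk1, if_true]
        have e3 : 2 * (k+1).toNat = 2 * k.toNat + 2 := by omega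
        rw [e1, e2, e3]
        exact keyW (2 * k.toNat)
      · have hk' : ¬ (0 ≤ k) := by omega
        have e1 : D k = V (2 * (-k).toNat) := by simp only [hDdef, hk', if_false]
        rcases eq_or_lt_of_le (by omega : k + 1 ≤ 0) with h0 | hneg
        · -- k = -1
          have e2 : D (k+1) = W 0 := by
            have h00 : k + 1 = 0 := h0
            rw [h00]
            simp [hDdef]
          have e3 : 2 * (-k).toNat = 2 := by omega
          rw [e1, e2, e3, ← hV0]
          exact keyV 0
        · have hk1 : ¬ (0 ≤ k + 1) := by omega
          have e2 : D (k+1) = V (2 * (-(k+1)).toNat) := by simp only [hDdef, hk1, if_false]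
          have e3 : 2 * (-k).toNat = 2 * (-(k+1)).toNat + 2 := by omega
          rw [e1, e2, e3]
          exact keyV (2 * (-(k+1)).toNat)
    -- the pseudometric
    set d : G → G → ℝ := fun x y => bkLen D (x⁻¹ * y) with hd
    have hrefl : ∀ x : G, d x x = 0 := by
      intro x
      show bkLen D (x⁻¹ * x) = 0
      rw [inv_mul_cancel]
      exact bk_one hone hexh
    have hdsymm : ∀ x y : G, d x y = d y x := by
      intro x y
      show bkLen D (x⁻¹ * y) = bkLen D (y⁻¹ * x)
      rw [show y⁻¹ * x = (x⁻¹*y)⁻¹ by group, bk_symm hsym]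
    have hdtri : ∀ x y z : G, d x z ≤ d x y + d y z := by
      intro x y z
      have := bk_subadd hexh (x⁻¹*y) (y⁻¹*z)
      rw [show (x⁻¹*y)*(y⁻¹*z) = x⁻¹*z by group] at this
      exact this
    have hdinv : ∀ g x y : G, d (g*x) (g*y) = d x y := by
      intro g x y
      show bkLen D ((g*x)⁻¹*(g*y)) = bkLen D (x⁻¹*y)
      rw [show (g*x)⁻¹*(g*y) = x⁻¹*y by group]
    have hcontd : Continuous fun p : G × G => d p.1 p.2 := by
      rw [continuous_iff_continuousAt]
      intro p
      rw [ContinuousAt, Metric.tendsto_nhds]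
      intro ε hε
      obtain ⟨n, hn⟩ := exists_pow_lt_of_lt_one (half_pos hε) (by norm_num : (1:ℝ)/2 < 1)
      have h2n : (2:ℝ)^(-(n:ℤ)) < ε/2 := by
        have he : (2:ℝ)^(-(n:ℤ)) = ((1:ℝ)/2)^n := by
          rw [zpow_neg, ← zpow_natCast]
          simp [one_div, inv_zpow]
        rw [he]; exact hn
      have hDn : D (-(n:ℤ)) ∈ nhds (1:G) := hnhds n
      have hm1 : {z : G | p.1⁻¹ * z ∈ D (-(n:ℤ))} ∈ nhds p.1 := by
        have hc : Continuous fun z : G => p.1⁻¹ * z := continuous_mul_left _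
        refine hc.continuousAt.preimage_mem_nhds ?_
        have h1 : p.1⁻¹ * p.1 = 1 := inv_mul_cancel p.1
        rw [h1]; exact hDn
      have hm2 : {z : G | p.2⁻¹ * z ∈ D (-(n:ℤ))} ∈ nhds p.2 := by
        have hc : Continuous fun z : G => p.2⁻¹ * z := continuous_mul_left _
        refine hc.continuousAt.preimage_mem_nhds ?_
        have h1 : p.2⁻¹ * p.2 = 1 := inv_mul_cancel p.2
        rw [h1]; exact hDn
      have hprod := Filter.prod_mem_prod hm1 hm2
      rw [← nhds_prod_eq] at hprod
      filter_upwards [hprod] with q hq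
      obtain ⟨hq1, hq2⟩ := hq
      have b1 : d p.1 q.1 ≤ (2:ℝ)^(-(n:ℤ)) := bk_le_of_mem hq1
      have b2 : d p.2 q.2 ≤ (2:ℝ)^(-(n:ℤ)) := bk_le_of_mem hq2
      have hnn1 : 0 ≤ d p.1 q.1 := bk_nonneg hexh _
      have hnn2 : 0 ≤ d p.2 q.2 := bk_nonneg hexh _
      rw [Real.dist_eq]
      show |d q.1 q.2 - d p.1 p.2| < ε
      have hup : d q.1 q.2 ≤ d q.1 p.1 + d p.1 p.2 + d p.2 q.2 := by
        have t1 := hdtri q.1 p.1 q.2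
        have t2 := hdtri p.1 p.2 q.2
        linarith
      have hdown : d p.1 p.2 ≤ d p.1 q.1 + d q.1 q.2 + d q.2 p.2 := by
        have t1 := hdtri p.1 q.1 p.2
        have t2 := hdtri q.1 q.2 p.2
        linarith
      have hs1 : d q.1 p.1 = d p.1 q.1 := hdsymm q.1 p.1
      have hs2 : d q.2 p.2 = d p.2 q.2 := hdsymm q.2 p.2
      rw [abs_lt]
      constructor <;> [skip; skip] <;> linarith
    obtain ⟨C, hC⟩ := hCB d hcontd hrefl hdsymm hdtri hdinv
    obtain ⟨N, hN⟩ := pow_unbounded_of_one_lt C (one_lt_two (α := ℝ))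
    have hCN : C < (2:ℝ)^(N:ℤ) := by rw [zpow_natCast]; exact hN
    have hGmem : ∀ g : G, g ∈ W (2*N) := by
      intro g
      have h1 : d 1 g ≤ C := hC 1 (Set.mem_univ 1) g (Set.mem_univ g)
      have h2 : bkLen D g ≤ C := by
        have : d 1 g = bkLen D g := by
          show bkLen D ((1:G)⁻¹ * g) = bkLen D g
          rw [inv_one, one_mul]
        rw [← this]; exact h1
      have h3 : bkLen D g < (2:ℝ)^(N:ℤ) := lt_of_le_of_lt h2 hCN
      have h4 : g ∈ D (N:ℤ) := bk_lt_mem hone htriple hexh h3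
      rw [hDpos N] at h4
      exact h4
    -- conclusion
    intro Vf hVf
    obtain ⟨F, hF⟩ := hWrp (2*N) Vf hVf
    exact ⟨F, fun x _ => hF (hGmem x)⟩
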